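/- Let A, B be C*-algebras and P : A → B a bounded orthogonally additive n-homogeneous polynomial. If P is zero product preserving on the positive cone A₊ (ab = 0 implies P(a)P(b) = 0 for a, b ∈ A₊), then P is zero product preserving on A_sa (ab = 0 implies P(a)P(b) = 0 for self-adjoint a, b). -/

import Mathlib

/-- `P : E → F` is a bounded `n`-homogeneous polynomial: `P x = L(x,…,x)` for a bounded
symmetric `n`-linear map `L`. -/
def IsHomogPolynomial {E F : Type*} [NormedAddCommGroup E] [NormedSpace ℂ E]
    [NormedAddCommGroup F] [NormedSpace ℂ F] (n : ℕ) (P : E → F) : Prop :=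
  ∃ L : ContinuousMultilinearMap ℂ (fun _ : Fin n => E) F,
    (∀ (v : Fin n → E) (σ : Equiv.Perm (Fin n)), (L fun i => v (σ i)) = L v) ∧
    ∀ x : E, P x = L fun _ => x

section Aux

variable {A : Type*} [NonUnitalCStarAlgebra A]

/-- If `a * b = 0` then `cfcₙ f a * b = 0`. -/
lemma cfcn_mul_eq_zero_aux {a b : A} (ha : IsSelfAdjoint a) (hab : a * b = 0)
    (f : ℝ → ℝ) (hf : ContinuousOn f (quasispectrum ℝ a)) (hf0 : f 0 = 0) :
    cfcₙ f a * b = 0 := by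
  rw [cfcₙ_apply f a hf hf0 ha]
  refine ContinuousMapZero.nonUnitalStarAlgHom_apply_mul_eq_zero _ b ?_ ?_
    (cfcₙHom_continuous ha) _
  · rw [show cfcₙHom ha (ContinuousMapZero.id _) = a from cfcₙHom_id ha]; exact hab
  · rw [star_trivial, show cfcₙHom ha (ContinuousMapZero.id _) = a from cfcₙHom_id ha]
    exact hab

/-- If `b * a = 0` then `b * cfcₙ f a = 0`. -/
lemma mul_cfcn_eq_zero_aux {a b : A} (ha : IsSelfAdjoint a) (hba : b * a = 0)
    (f : ℝ → ℝ) (hf : ContinuousOn f (quasispectrum ℝ a)) (hf0 : f 0 = 0) :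
    b * cfcₙ f a = 0 := by
  rw [cfcₙ_apply f a hf hf0 ha]
  refine ContinuousMapZero.mul_nonUnitalStarAlgHom_apply_eq_zero _ b ?_ ?_
    (cfcₙHom_continuous ha) _
  · rw [show cfcₙHom ha (ContinuousMapZero.id _) = a from cfcₙHom_id ha]; exact hba
  · rw [star_trivial, show cfcₙHom ha (ContinuousMapZero.id _) = a from cfcₙHom_id ha]
    exact hba

lemma orth_cfcn_cfcn {a b : A} (ha : IsSelfAdjoint a) (hb : IsSelfAdjoint b)
    (hab : a * b = 0) (hba : b * a = 0)
    (f g : ℝ → ℝ) (hf : ContinuousOn f (quasispectrum ℝ a)) (hf0 : f 0 = 0)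
    (hg : ContinuousOn g (quasispectrum ℝ b)) (hg0 : g 0 = 0) :
    cfcₙ f a * cfcₙ g b = 0 := by
  have h1 : cfcₙ f a * b = 0 := cfcn_mul_eq_zero_aux ha hab f hf hf0
  exact mul_cfcn_eq_zero_aux hb h1 g hg hg0

end Aux

/-- an orthogonally additive bounded `n`-homogeneous polynomial between
C*-algebras which preserves zero products of positive elements also preserves zero
products of self-adjoint elements. -/
theorem stmt_6 {A B : Type*} [NonUnitalCStarAlgebra A] [PartialOrder A] [StarOrderedRing A]
    [NonUnitalCStarAlgebra B]
    (n : ℕ) (P : A → B) (hP : IsHomogPolynomial n P)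
    (horth : ∀ a b : A, a * b = 0 → b * a = 0 → P (a + b) = P a + P b)
    (hzp : ∀ a b : A, 0 ≤ a → 0 ≤ b → a * b = 0 → P a * P b = 0) :
    ∀ a b : A, IsSelfAdjoint a → IsSelfAdjoint b → a * b = 0 → P a * P b = 0 := by
  obtain ⟨L, -, hL⟩ := hP
  -- homogeneity under negation
  have hneg : ∀ x : A, P (-x) = ((-1 : ℂ) ^ n) • P x := by
    intro x
    rw [hL, hL]
    have : (fun _ : Fin n => -x) = fun i : Fin n => (fun _ : Fin n => (-1 : ℂ)) i •
        (fun _ : Fin n => x) i := by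
      funext i; simp
    rw [this, L.map_smul_univ]
    simp
  -- decomposition via orthogonal additivity
  have hdecomp : ∀ x : A, IsSelfAdjoint x → P x = P x⁺ + ((-1 : ℂ) ^ n) • P x⁻ := by
    intro x hx
    have h1 : x⁺ * (-x⁻) = 0 := by simp
    have h2 : (-x⁻) * x⁺ = 0 := by simp
    have hx' : x = x⁺ + (-x⁻) := by
      rw [← sub_eq_add_neg, CFC.posPart_sub_negPart x hx]
    calc P x = P (x⁺ + (-x⁻)) := by rw [← hx']
      _ = P x⁺ + P (-x⁻) := horth _ _ h1 h2
      _ = P x⁺ + ((-1 : ℂ) ^ n) • P x⁻ := by rw [hneg]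
  intro a b ha hb hab
  have hba : b * a = 0 := by
    have := congrArg star hab
    rwa [star_mul, ha.star_eq, hb.star_eq, star_zero] at this
  have hcont : ∀ s : Set ℝ, ContinuousOn (·⁺ : ℝ → ℝ) s := fun s => by fun_prop
  have hcont' : ∀ s : Set ℝ, ContinuousOn (·⁻ : ℝ → ℝ) s := fun s => by fun_prop
  -- all four pairwise products of parts vanish
  have key : ∀ (f g : ℝ → ℝ), ContinuousOn f (quasispectrum ℝ a) → f 0 = 0 →
      ContinuousOn g (quasispectrum ℝ b) → g 0 = 0 → cfcₙ f a * cfcₙ g b = 0 :=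
    fun f g hf hf0 hg hg0 => orth_cfcn_cfcn ha hb hab hba f g hf hf0 hg hg0
  have hpp : a⁺ * b⁺ = 0 := key _ _ (hcont _) (by simp) (hcont _) (by simp)
  have hpn : a⁺ * b⁻ = 0 := key _ _ (hcont _) (by simp) (hcont' _) (by simp)
  have hnp : a⁻ * b⁺ = 0 := key _ _ (hcont' _) (by simp) (hcont _) (by simp)
  have hnn : a⁻ * b⁻ = 0 := key _ _ (hcont' _) (by simp) (hcont' _) (by simp)
  have Hpp : P a⁺ * P b⁺ = 0 := hzp _ _ (CFC.posPart_nonneg a) (CFC.posPart_nonneg b) hpp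
  have Hpn : P a⁺ * P b⁻ = 0 := hzp _ _ (CFC.posPart_nonneg a) (CFC.negPart_nonneg b) hpn
  have Hnp : P a⁻ * P b⁺ = 0 := hzp _ _ (CFC.negPart_nonneg a) (CFC.posPart_nonneg b) hnp
  have Hnn : P a⁻ * P b⁻ = 0 := hzp _ _ (CFC.negPart_nonneg a) (CFC.negPart_nonneg b) hnn
  rw [hdecomp a ha, hdecomp b hb]
  simp only [mul_add, add_mul, smul_mul_assoc, mul_smul_comm, Hpp, Hpn, Hnp, Hnn,
    smul_zero, add_zero, zero_add]
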